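/- Let \(H_I = S\otimes B^\dagger + S^\dagger\otimes B\), and suppose the environment density matrix \(\rho_E\) satisfies \(\mathrm{Tr}(B^2\rho_E) = \mathrm{Tr}((B^\dagger)^2\rho_E) = 0\). Define \(z = \mathrm{Tr}(B^\dagger\rho_E B)\), \(\bar z = \mathrm{Tr}(B\rho_E B^\dagger)\), \(L_1 = \sqrt{z}\,S\), \(L_2 = \sqrt{\bar z}\,S^\dagger\). Then for every system density matrix \(\rho_S\): \(-\tfrac{1}{2}\,\mathrm{Tr}_E\,[H_I,[H_I,\rho_S\otimes\rho_E]] = \sum_{j=1}^2 \Big(L_j\rho_S L_j^\dagger - \tfrac12\{L_j^\dagger L_j, \rho_S\}\Big)\). -/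

import Mathlib

open Matrix Complex
open scoped Kronecker ComplexOrder

/-- Schatten 1-norm (trace norm) of a complex square matrix. -/
noncomputable def traceNorm {n : Type*} [Fintype n] [DecidableEq n] (A : Matrix n n ℂ) : ℝ :=
  ((Matrix.posSemidef_conjTranspose_mul_self A).1.eigenvectorUnitary.1 *
    diagonal (((↑) : ℝ → ℂ) ∘ Real.sqrt ∘ (Matrix.posSemidef_conjTranspose_mul_self A).1.eigenvalues) *
    (star (Matrix.posSemidef_conjTranspose_mul_self A).1.eigenvectorUnitary : Matrix n n ℂ)).trace.re

/-- Operator (spectral) norm of a complex square matrix. -/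
noncomputable def opNorm {n : Type*} [Fintype n] [DecidableEq n] (A : Matrix n n ℂ) : ℝ :=
  ‖Matrix.toEuclideanCLM (𝕜 := ℂ) A‖

/-- Induced 1→1 norm of a superoperator (map on matrices). -/
noncomputable def indNorm {n : Type*} [Fintype n] [DecidableEq n]
    (f : Matrix n n ℂ → Matrix n n ℂ) : ℝ :=
  sSup {y | ∃ X : Matrix n n ℂ, traceNorm X ≤ 1 ∧ y = traceNorm (f X)}

/-- Partial trace over the environment (second) tensor factor. -/
noncomputable def ptraceE {s e : Type*} [Fintype e]
    (A : Matrix (s × e) (s × e) ℂ) : Matrix s s ℂ :=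
  Matrix.of fun i j => ∑ k, A (i, k) (j, k)

/-- A density matrix: positive semidefinite with unit trace. -/
def IsDensity {n : Type*} [Fintype n] [DecidableEq n] (ρ : Matrix n n ℂ) : Prop :=
  ρ.PosSemidef ∧ ρ.trace = 1

/-- Commutator of matrices. -/
noncomputable def mcomm {n : Type*} [Fintype n] (A X : Matrix n n ℂ) : Matrix n n ℂ := A * X - X * A

lemma ptraceE_add {s e : Type*} [Fintype e] (A B : Matrix (s × e) (s × e) ℂ) :
    ptraceE (A + B) = ptraceE A + ptraceE B := by
  ext i j; simp [ptraceE, Finset.sum_add_distrib]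

lemma ptraceE_sub {s e : Type*} [Fintype e] (A B : Matrix (s × e) (s × e) ℂ) :
    ptraceE (A - B) = ptraceE A - ptraceE B := by
  ext i j; simp [ptraceE, Finset.sum_sub_distrib]

lemma ptraceE_kron {s e : Type*} [Fintype e] (A : Matrix s s ℂ) (X : Matrix e e ℂ) :
    ptraceE (A ⊗ₖ X) = X.trace • A := by
  ext i j
  rw [Matrix.smul_apply]
  simp only [ptraceE, Matrix.of_apply, Matrix.kroneckerMap_apply, Matrix.trace, Matrix.diag, smul_eq_mul, Finset.mul_sum, Finset.sum_mul]
  exact Finset.sum_congr rfl fun k _ => mul_comm _ _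

lemma herm_trace_re {n : Type*} [Fintype n] {M : Matrix n n ℂ} (hM : M.IsHermitian) :
    ((M.trace.re : ℝ) : ℂ) = M.trace := by
  have h : (starRingEnd ℂ) M.trace = M.trace := by
    calc (starRingEnd ℂ) M.trace = Mᴴ.trace := (Matrix.trace_conjTranspose M).symm
    _ = M.trace := by rw [hM]
  exact Complex.conj_eq_iff_re.mp h

lemma psd_trace_re_nonneg {n : Type*} [Fintype n] [DecidableEq n] {M : Matrix n n ℂ}
    (hM : M.PosSemidef) : 0 ≤ M.trace.re := by
  have h : ∀ i, (0:ℂ) ≤ M i i := fun i => by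
    exact hM.diag_nonneg
  have h' : ∀ i, 0 ≤ (M i i).re := fun i => (Complex.le_def.mp (h i)).1
  rw [Matrix.trace]
  simpa [Matrix.diag] using Finset.sum_nonneg fun i _ => h' i


/-- With H_I = S⊗B† + S†⊗B and Tr(B²ρE) = Tr((B†)²ρE) = 0, the dissipator
-½ Tr_E [H_I,[H_I,ρS⊗ρE]] takes Lindblad form with jumps L₁ = √z S, L₂ = √z̄ S†. -/
theorem stmt10 {s e : Type*} [Fintype s] [DecidableEq s] [Fintype e] [DecidableEq e]
    (S : Matrix s s ℂ) (B : Matrix e e ℂ) (ρS : Matrix s s ℂ) (ρE : Matrix e e ℂ)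
    (hρS : IsDensity ρS) (hρE : IsDensity ρE)
    (hB2 : (B * B * ρE).trace = 0) (hB2' : (Bᴴ * Bᴴ * ρE).trace = 0) :
    let HI : Matrix (s × e) (s × e) ℂ := S ⊗ₖ Bᴴ + Sᴴ ⊗ₖ B
    let z : ℝ := ((Bᴴ * ρE * B).trace).re
    let zbar : ℝ := ((B * ρE * Bᴴ).trace).re
    let L₁ : Matrix s s ℂ := ((Real.sqrt z : ℝ) : ℂ) • S
    let L₂ : Matrix s s ℂ := ((Real.sqrt zbar : ℝ) : ℂ) • Sᴴ
    (-(1/2 : ℂ)) • ptraceE (mcomm HI (mcomm HI (ρS ⊗ₖ ρE))) =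
      (L₁ * ρS * L₁ᴴ - (1/2 : ℂ) • (L₁ᴴ * L₁ * ρS + ρS * (L₁ᴴ * L₁))) +
      (L₂ * ρS * L₂ᴴ - (1/2 : ℂ) • (L₂ᴴ * L₂ * ρS + ρS * (L₂ᴴ * L₂))) := by
  intro HI z zbar L₁ L₂
  have hMz : (Bᴴ * ρE * B).PosSemidef := hρE.1.conjTranspose_mul_mul_same B
  have hMzb : (B * ρE * Bᴴ).PosSemidef := hρE.1.mul_mul_conjTranspose_same B
  have hz : ((z : ℝ) : ℂ) = (Bᴴ * ρE * B).trace := herm_trace_re hMz.1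
  have hzb : ((zbar : ℝ) : ℂ) = (B * ρE * Bᴴ).trace := herm_trace_re hMzb.1
  have hz0 : 0 ≤ z := psd_trace_re_nonneg hMz
  have hzb0 : 0 ≤ zbar := psd_trace_re_nonneg hMzb
  -- canonical trace identities
  have cz1 : (Bᴴ * ρE * B).trace = ((z : ℝ) : ℂ) := hz.symm
  have cz2 : (B * Bᴴ * ρE).trace = ((z : ℝ) : ℂ) := by
    rw [← Matrix.trace_mul_cycle Bᴴ ρE B]; exact hz.symm
  have cz3 : (ρE * B * Bᴴ).trace = ((z : ℝ) : ℂ) := by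
    rw [Matrix.trace_mul_cycle ρE B Bᴴ]; exact hz.symm
  have cb1 : (B * ρE * Bᴴ).trace = ((zbar : ℝ) : ℂ) := hzb.symm
  have cb2 : (Bᴴ * B * ρE).trace = ((zbar : ℝ) : ℂ) := by
    rw [← Matrix.trace_mul_cycle B ρE Bᴴ]; exact hzb.symm
  have cb3 : (ρE * Bᴴ * B).trace = ((zbar : ℝ) : ℂ) := by
    rw [Matrix.trace_mul_cycle ρE Bᴴ B]; exact hzb.symm
  have z1 : (ρE * B * B).trace = 0 := by
    rw [Matrix.trace_mul_cycle ρE B B, Matrix.trace_mul_cycle B ρE B]; exact hB2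
  have z2 : (B * ρE * B).trace = 0 := by
    rw [Matrix.trace_mul_cycle B ρE B]; exact hB2
  have z1' : (ρE * Bᴴ * Bᴴ).trace = 0 := by
    rw [Matrix.trace_mul_cycle ρE Bᴴ Bᴴ, Matrix.trace_mul_cycle Bᴴ ρE Bᴴ]; exact hB2'
  have z2' : (Bᴴ * ρE * Bᴴ).trace = 0 := by
    rw [Matrix.trace_mul_cycle Bᴴ ρE Bᴴ]; exact hB2'
  -- expansion
  have hexp : mcomm HI (mcomm HI (ρS ⊗ₖ ρE)) =
      ((S * S * ρS) ⊗ₖ (Bᴴ * Bᴴ * ρE) + (S * Sᴴ * ρS) ⊗ₖ (Bᴴ * B * ρE)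
        + (Sᴴ * S * ρS) ⊗ₖ (B * Bᴴ * ρE) + (Sᴴ * Sᴴ * ρS) ⊗ₖ (B * B * ρE))
      - ((S * ρS * S) ⊗ₖ (Bᴴ * ρE * Bᴴ) + (S * ρS * Sᴴ) ⊗ₖ (Bᴴ * ρE * B)
        + (Sᴴ * ρS * S) ⊗ₖ (B * ρE * Bᴴ) + (Sᴴ * ρS * Sᴴ) ⊗ₖ (B * ρE * B))
      - ((S * ρS * S) ⊗ₖ (Bᴴ * ρE * Bᴴ) + (S * ρS * Sᴴ) ⊗ₖ (Bᴴ * ρE * B)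
        + (Sᴴ * ρS * S) ⊗ₖ (B * ρE * Bᴴ) + (Sᴴ * ρS * Sᴴ) ⊗ₖ (B * ρE * B))
      + ((ρS * S * S) ⊗ₖ (ρE * Bᴴ * Bᴴ) + (ρS * S * Sᴴ) ⊗ₖ (ρE * Bᴴ * B)
        + (ρS * Sᴴ * S) ⊗ₖ (ρE * B * Bᴴ) + (ρS * Sᴴ * Sᴴ) ⊗ₖ (ρE * B * B)) := by
    show (S ⊗ₖ Bᴴ + Sᴴ ⊗ₖ B) * ((S ⊗ₖ Bᴴ + Sᴴ ⊗ₖ B) * (ρS ⊗ₖ ρE) - (ρS ⊗ₖ ρE) * (S ⊗ₖ Bᴴ + Sᴴ ⊗ₖ B))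
        - ((S ⊗ₖ Bᴴ + Sᴴ ⊗ₖ B) * (ρS ⊗ₖ ρE) - (ρS ⊗ₖ ρE) * (S ⊗ₖ Bᴴ + Sᴴ ⊗ₖ B)) * (S ⊗ₖ Bᴴ + Sᴴ ⊗ₖ B) = _
    simp only [Matrix.add_mul, Matrix.mul_add, Matrix.mul_sub, Matrix.sub_mul,
      ← Matrix.mul_kronecker_mul, Matrix.mul_assoc]
    abel
  rw [hexp, ptraceE_add, ptraceE_sub, ptraceE_sub]
  simp only [ptraceE_add, ptraceE_kron]
  rw [cz1, cz2, cz3, cb1, cb2, cb3, z1, z2, z1', z2']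
  rw [hB2, hB2']
  simp only [L₁, L₂, Matrix.conjTranspose_smul, Complex.star_def, Complex.conj_ofReal,
    Matrix.smul_mul, Matrix.mul_smul, smul_smul, Matrix.conjTranspose_conjTranspose,
    zero_smul, add_zero, zero_add, smul_add, Matrix.mul_assoc]
  rw [← Complex.ofReal_mul, ← Complex.ofReal_mul, Real.mul_self_sqrt hz0, Real.mul_self_sqrt hzb0]
  module
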